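/- Let a_1, a_2, a_3 be filtering elements over ℝⁿ whose C-components and J-components are all symmetric positive semidefinite. Then both (a_1 ⊗ a_2) ⊗ a_3 and a_1 ⊗ (a_2 ⊗ a_3) are well defined (all matrix inverses involved exist) and they are equal, i.e., the filtering operator ⊗ is associative on such elements. -/

import Mathlib

open Matrix

/-- A filtering element over `ℝⁿ`. -/
structure FilteringElem (n : ℕ) where
  A : Matrix (Fin n) (Fin n) ℝ
  b : Fin n → ℝ
  C : Matrix (Fin n) (Fin n) ℝ
  η : Fin n → ℝ
  J : Matrix (Fin n) (Fin n) ℝ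

/-- The filtering operator `⊗` on filtering elements. -/
noncomputable def filterOp {n : ℕ} (x y : FilteringElem n) : FilteringElem n where
  A := y.A * (1 + x.C * y.J)⁻¹ * x.A
  b := (y.A * (1 + x.C * y.J)⁻¹) *ᵥ (x.b + x.C *ᵥ y.η) + y.b
  C := y.A * (1 + x.C * y.J)⁻¹ * x.C * y.Aᵀ + y.C
  η := (x.Aᵀ * (1 + y.J * x.C)⁻¹) *ᵥ (y.η - y.J *ᵥ x.b) + x.η
  J := x.Aᵀ * (1 + y.J * x.C)⁻¹ * y.J * x.A + x.J

namespace FilterAux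

variable {n : ℕ}

/-- If `C` and `J` are PSD real matrices, `1 + C * J` is a unit. -/
lemma isUnit_one_add_psd_mul {C J : Matrix (Fin n) (Fin n) ℝ}
    (hC : C.PosSemidef) (hJ : J.PosSemidef) : IsUnit (1 + C * J) := by
  rw [Matrix.isUnit_iff_isUnit_det, isUnit_iff_ne_zero]
  intro hdet
  obtain ⟨v, hv, hv0⟩ := Matrix.exists_mulVec_eq_zero_iff.mpr hdet
  rw [Matrix.add_mulVec, Matrix.one_mulVec, ← Matrix.mulVec_mulVec] at hv0
  have hvC : v = - (C *ᵥ (J *ᵥ v)) := by linear_combination (norm := module) hv0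
  have h1 : (0:ℝ) ≤ v ⬝ᵥ J *ᵥ v := by simpa using hJ.dotProduct_mulVec_nonneg v
  have h2 : v ⬝ᵥ J *ᵥ v ≤ 0 := by
    have := hC.dotProduct_mulVec_nonneg (J *ᵥ v)
    simp only [star_trivial] at this
    have hEq : v ⬝ᵥ J *ᵥ v = -((J *ᵥ v) ⬝ᵥ C *ᵥ (J *ᵥ v)) := by
      nth_rewrite 1 [hvC]
      rw [neg_dotProduct, dotProduct_comm]
    rw [hEq]
    linarith
  have h0 : v ⬝ᵥ J *ᵥ v = 0 := le_antisymm h2 h1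
  have hJv : J *ᵥ v = 0 := (hJ.dotProduct_mulVec_zero_iff v).mp (by simpa using h0)
  rw [hJv, Matrix.mulVec_zero, neg_zero] at hvC
  exact hv hvC

lemma shift_inv {a b : Matrix (Fin n) (Fin n) ℝ}
    (h1 : IsUnit (1 + a * b)) (h2 : IsUnit (1 + b * a)) :
    b * (1 + a * b)⁻¹ = (1 + b * a)⁻¹ * b := by
  have hd1 : IsUnit (1 + a * b).det := (Matrix.isUnit_iff_isUnit_det _).mp h1
  have hd2 : IsUnit (1 + b * a).det := (Matrix.isUnit_iff_isUnit_det _).mp h2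
  calc b * (1 + a * b)⁻¹
      = (1 + b * a)⁻¹ * ((1 + b * a) * (b * (1 + a * b)⁻¹)) :=
        (Matrix.nonsing_inv_mul_cancel_left _ _ hd2).symm
    _ = (1 + b * a)⁻¹ * b := by
        rw [← mul_assoc (1 + b * a) b,
          show (1 + b * a) * b = b * (1 + a * b) by noncomm_ring,
          mul_assoc b, Matrix.mul_nonsing_inv _ hd1, mul_one]

lemma psd_transpose_eq {M : Matrix (Fin n) (Fin n) ℝ} (h : M.PosSemidef) : Mᵀ = M := by
  rw [← Matrix.conjTranspose_eq_transpose_of_trivial]; exact h.1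

lemma transpose_inv_one_add {C J : Matrix (Fin n) (Fin n) ℝ}
    (hC : Cᵀ = C) (hJ : Jᵀ = J) :
    ((1 + C * J)⁻¹)ᵀ = (1 + J * C)⁻¹ := by
  rw [Matrix.transpose_nonsing_inv, Matrix.transpose_add, Matrix.transpose_one,
    Matrix.transpose_mul, hC, hJ]

/-- `(1 + C*J)⁻¹ * C` is PSD when `C, J` are PSD. -/
lemma psd_inv_mul {C J : Matrix (Fin n) (Fin n) ℝ}
    (hC : C.PosSemidef) (hJ : J.PosSemidef)
    (hP : IsUnit (1 + C * J)) (hP' : IsUnit (1 + J * C)) :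
    ((1 + C * J)⁻¹ * C).PosSemidef := by
  have hd' : IsUnit (1 + J * C).det := (Matrix.isUnit_iff_isUnit_det _).mp hP'
  have hCt := psd_transpose_eq hC
  have hJt := psd_transpose_eq hJ
  have hsh : C * (1 + J * C)⁻¹ = (1 + C * J)⁻¹ * C := shift_inv hP' hP
  have htr : ((1 + C * J)⁻¹ * C)ᵀ = (1 + C * J)⁻¹ * C := by
    rw [Matrix.transpose_mul, hCt, transpose_inv_one_add hCt hJt, hsh]
  have key : (1 + C * J)⁻¹ * C
      = (1 + C * J)⁻¹ * C * ((1 + C * J)⁻¹)ᵀ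
        + ((1 + C * J)⁻¹ * C) * J * ((1 + C * J)⁻¹ * C)ᵀ := by
    rw [htr, transpose_inv_one_add hCt hJt]
    calc (1 + C * J)⁻¹ * C
        = (1 + C * J)⁻¹ * C * ((1 + J * C) * (1 + J * C)⁻¹) := by
          rw [Matrix.mul_nonsing_inv _ hd', mul_one]
      _ = (1 + C * J)⁻¹ * C * (1 + J * C)⁻¹
          + (1 + C * J)⁻¹ * C * (J * (C * (1 + J * C)⁻¹)) := by noncomm_ring
      _ = _ := by rw [hsh]; noncomm_ring
  rw [key]
  have h1 : ((1 + C * J)⁻¹ * C * ((1 + C * J)⁻¹)ᵀ).PosSemidef := by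
    have := hC.mul_mul_conjTranspose_same (1 + C * J)⁻¹
    rwa [Matrix.conjTranspose_eq_transpose_of_trivial] at this
  have h2 : (((1 + C * J)⁻¹ * C) * J * ((1 + C * J)⁻¹ * C)ᵀ).PosSemidef := by
    have := hJ.mul_mul_conjTranspose_same ((1 + C * J)⁻¹ * C)
    rwa [Matrix.conjTranspose_eq_transpose_of_trivial] at this
  exact h1.add h2

lemma filterOp_C_psd (x y : FilteringElem n)
    (hCx : x.C.PosSemidef) (hJy : y.J.PosSemidef) (hCy : y.C.PosSemidef) :
    (filterOp x y).C.PosSemidef := by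
  have hP := isUnit_one_add_psd_mul hCx hJy
  have hP' := isUnit_one_add_psd_mul hJy hCx
  have h := (psd_inv_mul hCx hJy hP hP').mul_mul_conjTranspose_same y.A
  rw [Matrix.conjTranspose_eq_transpose_of_trivial] at h
  have heq : (filterOp x y).C = y.A * ((1 + x.C * y.J)⁻¹ * x.C) * y.Aᵀ + y.C := by
    show y.A * (1 + x.C * y.J)⁻¹ * x.C * y.Aᵀ + y.C = _
    noncomm_ring
  rw [heq]
  exact h.add hCy

lemma filterOp_J_psd (x y : FilteringElem n)
    (hJx : x.J.PosSemidef) (hCx : x.C.PosSemidef) (hJy : y.J.PosSemidef) :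
    (filterOp x y).J.PosSemidef := by
  have hP := isUnit_one_add_psd_mul hJy hCx
  have hP' := isUnit_one_add_psd_mul hCx hJy
  have h := (psd_inv_mul hJy hCx hP hP').mul_mul_conjTranspose_same x.Aᵀ
  rw [Matrix.conjTranspose_eq_transpose_of_trivial, Matrix.transpose_transpose] at h
  have heq : (filterOp x y).J = x.Aᵀ * ((1 + y.J * x.C)⁻¹ * y.J) * x.A + x.J := by
    show x.Aᵀ * (1 + y.J * x.C)⁻¹ * y.J * x.A + x.J = _
    noncomm_ring
  rw [heq]
  exact h.add hJx

/-- The duality anti-automorphism on filtering elements. -/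
def dual (w : FilteringElem n) : FilteringElem n :=
  ⟨w.Aᵀ, w.η, w.J, -w.b, w.C⟩

lemma dual_filterOp (x y : FilteringElem n) (hx : x.Cᵀ = x.C) (hy : y.Jᵀ = y.J) :
    dual (filterOp x y) = filterOp (dual y) (dual x) := by
  unfold filterOp dual
  congr 1
  · show (y.A * (1 + x.C * y.J)⁻¹ * x.A)ᵀ = x.Aᵀ * (1 + y.J * x.C)⁻¹ * y.Aᵀ
    rw [Matrix.transpose_mul, Matrix.transpose_mul, transpose_inv_one_add hx hy, mul_assoc]
  · show (x.Aᵀ * (1 + y.J * x.C)⁻¹) *ᵥ (y.η - y.J *ᵥ x.b) + x.η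
        = (x.Aᵀ * (1 + y.J * x.C)⁻¹) *ᵥ (y.η + y.J *ᵥ (-x.b)) + x.η
    rw [Matrix.mulVec_neg, ← sub_eq_add_neg]
  · show -((y.A * (1 + x.C * y.J)⁻¹) *ᵥ (x.b + x.C *ᵥ y.η) + y.b)
        = (y.Aᵀᵀ * (1 + x.C * y.J)⁻¹) *ᵥ (-x.b - x.C *ᵥ y.η) + -y.b
    rw [Matrix.transpose_transpose, Matrix.mulVec_sub, Matrix.mulVec_neg, Matrix.mulVec_add]
    abel

/-- Core identities with all the relevant matrices treated as atoms. -/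
lemma core_ids (A2 A3 C1 C2 J3 P Q Q' R S : Matrix (Fin n) (Fin n) ℝ)
    (hQd : Q = 1 + C2 * J3) (hQ'd : Q' = 1 + J3 * C2)
    (hRd : R = Q + A2 * P⁻¹ * C1 * A2ᵀ * J3)
    (hSd : S = P + C1 * A2ᵀ * Q'⁻¹ * J3 * A2)
    (hP : IsUnit P) (hQ : IsUnit Q) (hQ' : IsUnit Q')
    (hR : IsUnit R) (hS : IsUnit S) :
    A3 * R⁻¹ * A2 * P⁻¹ = A3 * Q⁻¹ * A2 * S⁻¹
    ∧ A3 * R⁻¹ = A3 * Q⁻¹ - A3 * Q⁻¹ * A2 * S⁻¹ * C1 * A2ᵀ * Q'⁻¹ * J3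
    ∧ A3 * Q⁻¹ * A2 * S⁻¹ * C1 * A2ᵀ * Q'⁻¹ * J3 * C2
      = A3 * Q⁻¹ * A2 * S⁻¹ * C1 * A2ᵀ - A3 * Q⁻¹ * A2 * S⁻¹ * C1 * A2ᵀ * Q'⁻¹ := by
  have hdP := (Matrix.isUnit_iff_isUnit_det _).mp hP
  have hdQ := (Matrix.isUnit_iff_isUnit_det _).mp hQ
  have hdQ' := (Matrix.isUnit_iff_isUnit_det _).mp hQ'
  have hdR := (Matrix.isUnit_iff_isUnit_det _).mp hR
  have hdS := (Matrix.isUnit_iff_isUnit_det _).mp hS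
  have e0 : J3 * Q⁻¹ = Q'⁻¹ * J3 := by
    have := shift_inv (a := C2) (b := J3)
      (by rw [← hQd]; exact hQ) (by rw [← hQ'd]; exact hQ')
    rwa [← hQd, ← hQ'd] at this
  have key : A2 * P⁻¹ * S = R * Q⁻¹ * A2 := by
    calc A2 * P⁻¹ * S
        = A2 * (P⁻¹ * P) + A2 * P⁻¹ * C1 * A2ᵀ * (Q'⁻¹ * J3) * A2 := by
          rw [hSd]; noncomm_ring
      _ = A2 * 1 + A2 * P⁻¹ * C1 * A2ᵀ * (J3 * Q⁻¹) * A2 := by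
          rw [Matrix.nonsing_inv_mul _ hdP, e0]
      _ = (Q * Q⁻¹) * A2 + A2 * P⁻¹ * C1 * A2ᵀ * (J3 * Q⁻¹) * A2 := by
          rw [Matrix.mul_nonsing_inv _ hdQ]; noncomm_ring
      _ = R * Q⁻¹ * A2 := by rw [hRd]; noncomm_ring
  have e1 : A3 * R⁻¹ * A2 * P⁻¹ = A3 * Q⁻¹ * A2 * S⁻¹ := by
    calc A3 * R⁻¹ * A2 * P⁻¹
        = A3 * R⁻¹ * ((A2 * P⁻¹ * S) * S⁻¹) := by
          rw [Matrix.mul_nonsing_inv_cancel_right _ _ hdS]; noncomm_ring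
      _ = A3 * (R⁻¹ * R) * (Q⁻¹ * A2 * S⁻¹) := by rw [key]; noncomm_ring
      _ = A3 * Q⁻¹ * A2 * S⁻¹ := by
          rw [Matrix.nonsing_inv_mul _ hdR]; noncomm_ring
  have hRQ : R - Q = A2 * P⁻¹ * C1 * A2ᵀ * J3 := by rw [hRd]; noncomm_ring
  have e2 : A3 * R⁻¹ = A3 * Q⁻¹ - A3 * Q⁻¹ * A2 * S⁻¹ * C1 * A2ᵀ * Q'⁻¹ * J3 := by
    calc A3 * R⁻¹
        = A3 * R⁻¹ * (Q * Q⁻¹) := by rw [Matrix.mul_nonsing_inv _ hdQ, mul_one]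
      _ = A3 * (R⁻¹ * R) * Q⁻¹ - A3 * R⁻¹ * (R - Q) * Q⁻¹ := by noncomm_ring
      _ = A3 * Q⁻¹ - (A3 * R⁻¹ * A2 * P⁻¹) * (C1 * A2ᵀ * (J3 * Q⁻¹)) := by
          rw [Matrix.nonsing_inv_mul _ hdR, hRQ]; noncomm_ring
      _ = A3 * Q⁻¹ - (A3 * Q⁻¹ * A2 * S⁻¹) * (C1 * A2ᵀ * (Q'⁻¹ * J3)) := by
          rw [e1, e0]
      _ = _ := by noncomm_ring
  refine ⟨e1, e2, ?_⟩
  calc A3 * Q⁻¹ * A2 * S⁻¹ * C1 * A2ᵀ * Q'⁻¹ * J3 * C2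
      = A3 * Q⁻¹ * A2 * S⁻¹ * C1 * A2ᵀ * (Q'⁻¹ * Q')
        - A3 * Q⁻¹ * A2 * S⁻¹ * C1 * A2ᵀ * Q'⁻¹ := by rw [hQ'd]; noncomm_ring
    _ = _ := by rw [Matrix.nonsing_inv_mul _ hdQ', mul_one]

lemma comp_ABC (A1 A2 A3 C1 C2 C3 J3 P Q Q' R S : Matrix (Fin n) (Fin n) ℝ)
    (b1 b2 b3 e2v e3v : Fin n → ℝ)
    (hQd : Q = 1 + C2 * J3) (hQ'd : Q' = 1 + J3 * C2)
    (hRd : R = Q + A2 * P⁻¹ * C1 * A2ᵀ * J3)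
    (hSd : S = P + C1 * A2ᵀ * Q'⁻¹ * J3 * A2)
    (hP : IsUnit P) (hQ : IsUnit Q) (hQ' : IsUnit Q')
    (hR : IsUnit R) (hS : IsUnit S) (hQt : Q⁻¹ᵀ = Q'⁻¹) :
    (A3 * R⁻¹ * (A2 * P⁻¹ * A1) = A3 * Q⁻¹ * A2 * S⁻¹ * A1)
    ∧ ((A3 * R⁻¹) *ᵥ ((A2 * P⁻¹) *ᵥ (b1 + C1 *ᵥ e2v) + b2
          + (A2 * P⁻¹ * C1 * A2ᵀ + C2) *ᵥ e3v) + b3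
        = (A3 * Q⁻¹ * A2 * S⁻¹) *ᵥ (b1 + C1 *ᵥ ((A2ᵀ * Q'⁻¹) *ᵥ (e3v - J3 *ᵥ b2) + e2v))
          + ((A3 * Q⁻¹) *ᵥ (b2 + C2 *ᵥ e3v) + b3))
    ∧ (A3 * R⁻¹ * (A2 * P⁻¹ * C1 * A2ᵀ + C2) * A3ᵀ + C3
        = A3 * Q⁻¹ * A2 * S⁻¹ * C1 * (A3 * Q⁻¹ * A2)ᵀ + (A3 * Q⁻¹ * C2 * A3ᵀ + C3)) := by
  obtain ⟨e1, e2, e3⟩ := core_ids A2 A3 C1 C2 J3 P Q Q' R S hQd hQ'd hRd hSd hP hQ hQ' hR hS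
  refine ⟨?_, ?_, ?_⟩
  · simp only [← Matrix.mul_assoc]
    rw [e1]
  · simp only [Matrix.mulVec_add, Matrix.mulVec_sub, Matrix.add_mulVec, Matrix.sub_mulVec,
      Matrix.mulVec_mulVec, ← Matrix.mul_assoc]
    rw [e1, e2]
    simp only [Matrix.sub_mul, Matrix.sub_mulVec, ← Matrix.mul_assoc]
    rw [e3]
    simp only [Matrix.sub_mul, Matrix.sub_mulVec]
    abel
  · simp only [Matrix.transpose_mul, ← Matrix.mul_assoc]
    rw [hQt]
    simp only [Matrix.mul_add, Matrix.add_mul, ← Matrix.mul_assoc]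
    rw [e1, e2]
    simp only [Matrix.sub_mul, ← Matrix.mul_assoc]
    rw [e3]
    simp only [Matrix.sub_mul]
    abel

/-- The three "nontrivial" component equalities of associativity, at the level of
filtering elements. -/
lemma assoc_ABC (x y z : FilteringElem n)
    (hCx : x.C.PosSemidef) (hCy : y.C.PosSemidef)
    (hJy : y.J.PosSemidef) (hJz : z.J.PosSemidef)
    (hR : IsUnit (1 + (filterOp x y).C * z.J))
    (hS : IsUnit (1 + x.C * (filterOp y z).J)) :
    ((filterOp (filterOp x y) z).A = (filterOp x (filterOp y z)).A)
    ∧ ((filterOp (filterOp x y) z).b = (filterOp x (filterOp y z)).b)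
    ∧ ((filterOp (filterOp x y) z).C = (filterOp x (filterOp y z)).C) := by
  have hP := isUnit_one_add_psd_mul hCx hJy
  have hQ := isUnit_one_add_psd_mul hCy hJz
  have hQ' := isUnit_one_add_psd_mul hJz hCy
  have hQt : ((1 + y.C * z.J)⁻¹)ᵀ = (1 + z.J * y.C)⁻¹ :=
    transpose_inv_one_add (psd_transpose_eq hCy) (psd_transpose_eq hJz)
  exact comp_ABC x.A y.A z.A x.C y.C z.C z.J
    (1 + x.C * y.J) (1 + y.C * z.J) (1 + z.J * y.C)
    (1 + (y.A * (1 + x.C * y.J)⁻¹ * x.C * y.Aᵀ + y.C) * z.J)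
    (1 + x.C * (y.Aᵀ * (1 + z.J * y.C)⁻¹ * z.J * y.A + y.J))
    x.b y.b z.b y.η z.η rfl rfl (by noncomm_ring) (by noncomm_ring)
    hP hQ hQ' hR hS hQt

end FilterAux

open FilterAux

theorem filterOp_assoc (n : ℕ) (a₁ a₂ a₃ : FilteringElem n)
    (hC₁ : a₁.C.PosSemidef) (hJ₁ : a₁.J.PosSemidef)
    (hC₂ : a₂.C.PosSemidef) (hJ₂ : a₂.J.PosSemidef)
    (hC₃ : a₃.C.PosSemidef) (hJ₃ : a₃.J.PosSemidef) :
    IsUnit (1 + a₁.C * a₂.J) ∧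
    IsUnit (1 + a₂.C * a₃.J) ∧
    IsUnit (1 + (filterOp a₁ a₂).C * a₃.J) ∧
    IsUnit (1 + a₁.C * (filterOp a₂ a₃).J) ∧
    filterOp (filterOp a₁ a₂) a₃ = filterOp a₁ (filterOp a₂ a₃) := by
  have hP := isUnit_one_add_psd_mul hC₁ hJ₂
  have hQ := isUnit_one_add_psd_mul hC₂ hJ₃
  have hC₁₂ : (filterOp a₁ a₂).C.PosSemidef := filterOp_C_psd a₁ a₂ hC₁ hJ₂ hC₂
  have hJ₂₃ : (filterOp a₂ a₃).J.PosSemidef := filterOp_J_psd a₂ a₃ hJ₂ hC₂ hJ₃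
  have hR : IsUnit (1 + (filterOp a₁ a₂).C * a₃.J) := isUnit_one_add_psd_mul hC₁₂ hJ₃
  have hS : IsUnit (1 + a₁.C * (filterOp a₂ a₃).J) := isUnit_one_add_psd_mul hC₁ hJ₂₃
  refine ⟨hP, hQ, hR, hS, ?_⟩
  obtain ⟨hA, hb, hC⟩ := assoc_ABC a₁ a₂ a₃ hC₁ hC₂ hJ₂ hJ₃ hR hS
  -- the η and J components via duality
  have hd₁ : dual (filterOp (filterOp a₁ a₂) a₃)
      = filterOp (dual a₃) (filterOp (dual a₂) (dual a₁)) := by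
    rw [dual_filterOp _ _ (psd_transpose_eq hC₁₂) (psd_transpose_eq hJ₃),
      dual_filterOp _ _ (psd_transpose_eq hC₁) (psd_transpose_eq hJ₂)]
  have hd₂ : dual (filterOp a₁ (filterOp a₂ a₃))
      = filterOp (filterOp (dual a₃) (dual a₂)) (dual a₁) := by
    rw [dual_filterOp _ _ (psd_transpose_eq hC₁) (psd_transpose_eq hJ₂₃),
      dual_filterOp _ _ (psd_transpose_eq hC₂) (psd_transpose_eq hJ₃)]
  have hRd : IsUnit (1 + (filterOp (dual a₃) (dual a₂)).C * (dual a₁).J) :=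
    isUnit_one_add_psd_mul (filterOp_C_psd (dual a₃) (dual a₂) hJ₃ hC₂ hJ₂) hC₁
  have hSd : IsUnit (1 + (dual a₃).C * (filterOp (dual a₂) (dual a₁)).J) :=
    isUnit_one_add_psd_mul hJ₃ (filterOp_J_psd (dual a₂) (dual a₁) hC₂ hJ₂ hC₁)
  obtain ⟨_, hbd, hCd⟩ := assoc_ABC (dual a₃) (dual a₂) (dual a₁) hJ₃ hJ₂ hC₂ hC₁ hRd hSd
  have hη : (filterOp (filterOp a₁ a₂) a₃).η = (filterOp a₁ (filterOp a₂ a₃)).η := by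
    have h : (dual (filterOp (filterOp a₁ a₂) a₃)).b
        = (dual (filterOp a₁ (filterOp a₂ a₃))).b := by
      rw [hd₁, hd₂, ← hbd]
    exact h
  have hJ : (filterOp (filterOp a₁ a₂) a₃).J = (filterOp a₁ (filterOp a₂ a₃)).J := by
    have h : (dual (filterOp (filterOp a₁ a₂) a₃)).C
        = (dual (filterOp a₁ (filterOp a₂ a₃))).C := by
      rw [hd₁, hd₂, ← hCd]
    exact h
  have ext : ∀ u v : FilteringElem n,
      u.A = v.A → u.b = v.b → u.C = v.C → u.η = v.η → u.J = v.J → u = v := by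
    rintro ⟨_, _, _, _, _⟩ ⟨_, _, _, _, _⟩
    dsimp
    rintro rfl rfl rfl rfl rfl
    rfl
  exact ext _ _ hA hb hC hη hJ
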